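/- Every monotone increasing function f: [0,1] → X into a Dedekind complete Banach lattice X is order-McShane integrable with respect to Lebesgue measure. -/

import Mathlib

open MeasureTheory Set Filter

/-- A tagged partition of the set `A`: finitely many pairwise disjoint measurable
sets covering `A`, each with a tag point. -/
structure TaggedPart (T : Type*) [MeasurableSpace T] (A : Set T) where
  k : ℕ
  E : Fin k → Set T
  tag : Fin k → T
  meas : ∀ i, MeasurableSet (E i)
  disj : ∀ i j, i ≠ j → Disjoint (E i) (E j)
  cover : (⋃ i, E i) = A

namespace TaggedPart

variable {T : Type*} [MeasurableSpace T] {A : Set T}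

/-- A Henstock partition: each tag belongs to its set. -/
def IsHenstock (P : TaggedPart T A) : Prop := ∀ i, P.tag i ∈ P.E i

/-- `γ`-fineness: each set is within distance `γ (tag)` of its tag. -/
def IsFine [PseudoMetricSpace T] (γ : T → ℝ) (P : TaggedPart T A) : Prop :=
  ∀ i, ∀ w ∈ P.E i, dist w (P.tag i) < γ (P.tag i)

/-- The Riemann sum `σ(f, P) = ∑ μ(Eᵢ) • f(tᵢ)`. -/
noncomputable def sum {X : Type*} [AddCommMonoid X] [Module ℝ X]
    (P : TaggedPart T A) (f : T → X) (μ : Measure T) : X :=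
  ∑ i, (μ (P.E i)).toReal • f (P.tag i)

end TaggedPart

/-- A gage is a strictly positive function. -/
def IsGage {T : Type*} (γ : T → ℝ) : Prop := ∀ t, 0 < γ t

/-- An (o)-sequence: decreasing with infimum `0`. -/
def IsOSeq {X : Type*} [Lattice X] [AddCommGroup X] (b : ℕ → X) : Prop :=
  Antitone b ∧ IsGLB (Set.range b) 0

section Defs

variable {T : Type*} [MeasurableSpace T] [PseudoMetricSpace T]
  {X : Type*} [NormedAddCommGroup X] [Lattice X] [HasSolidNorm X] [IsOrderedAddMonoid X] [NormedSpace ℝ X]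

/-- Order-Henstock integrability of `f` on `A` with integral `J`. -/
def HasOHIntegralOn (f : T → X) (μ : Measure T) (A : Set T) (J : X) : Prop :=
  ∃ b : ℕ → X, IsOSeq b ∧ ∃ γ : ℕ → T → ℝ, (∀ n, IsGage (γ n)) ∧
    ∀ n (P : TaggedPart T A), P.IsHenstock → P.IsFine (γ n) →
      |P.sum f μ - J| ≤ b n

/-- Order-McShane (free partition) integrability of `f` on `A` with integral `J`. -/
def HasOMIntegralOn (f : T → X) (μ : Measure T) (A : Set T) (J : X) : Prop :=
  ∃ b : ℕ → X, IsOSeq b ∧ ∃ γ : ℕ → T → ℝ, (∀ n, IsGage (γ n)) ∧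
    ∀ n (P : TaggedPart T A), P.IsFine (γ n) → |P.sum f μ - J| ≤ b n

/-- Order-McShane integrability with a prescribed regulating (o)-sequence `b`. -/
def HasOMIntegralOnWith (f : T → X) (μ : Measure T) (A : Set T) (J : X)
    (b : ℕ → X) : Prop :=
  ∃ γ : ℕ → T → ℝ, (∀ n, IsGage (γ n)) ∧
    ∀ n (P : TaggedPart T A), P.IsFine (γ n) → |P.sum f μ - J| ≤ b n

/-- Norm-Henstock integrability of `f` on `A` with integral `J`. -/
def HasNormHIntegralOn (f : T → X) (μ : Measure T) (A : Set T) (J : X) : Prop :=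
  ∀ ε : ℝ, 0 < ε → ∃ γ : T → ℝ, IsGage γ ∧
    ∀ P : TaggedPart T A, P.IsHenstock → P.IsFine γ → ‖P.sum f μ - J‖ ≤ ε

/-- Norm-McShane (free partition) integrability of `f` on `A` with integral `J`. -/
def HasNormMIntegralOn (f : T → X) (μ : Measure T) (A : Set T) (J : X) : Prop :=
  ∀ ε : ℝ, 0 < ε → ∃ γ : T → ℝ, IsGage γ ∧
    ∀ P : TaggedPart T A, P.IsFine γ → ‖P.sum f μ - J‖ ≤ ε

end Defs


open MeasureTheory Set Filter

section OMAux

lemma OM.sum_range_double {M : Type*} [AddCommMonoid M] (g : ℕ → M) (N : ℕ) :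
    ∑ k ∈ Finset.range (2*N), g k = ∑ j ∈ Finset.range N, (g (2*j) + g (2*j+1)) := by
  induction N with
  | zero => simp
  | succ N ih =>
      rw [Nat.mul_succ, Finset.sum_range_succ, Finset.sum_range_succ, Finset.sum_range_succ, ← ih]
      abel

variable {X : Type*} [NormedAddCommGroup X] [Lattice X] [HasSolidNorm X] [IsOrderedAddMonoid X] [NormedSpace ℝ X]

lemma OM.nonneg_of_add_self {y : X} (h : 0 ≤ y + y) : 0 ≤ y := by
  have h1 : y⁻ + y⁻ ≤ y⁺ + y⁺ := by
    rw [← sub_nonneg]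
    calc (0:X) ≤ y + y := h
    _ = y⁺ + y⁺ - (y⁻ + y⁻) := by
        conv_lhs => rw [← posPart_sub_negPart y]
        abel
  have h2 : y⁻ ≤ y⁺ + y⁺ := le_trans (le_add_of_nonneg_left (negPart_nonneg y)) h1
  have h3 : y⁻ - y⁺ ≤ y⁺ ⊓ y⁻ :=
    le_inf (by rwa [sub_le_iff_le_add]) (sub_le_self _ (posPart_nonneg y))
  rw [posPart_inf_negPart_eq_zero] at h3
  have h4 : y⁻ ≤ y⁺ := by rwa [sub_nonpos] at h3
  have h5 : y⁻ = 0 := by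
    have : y⁺ ⊓ y⁻ = y⁻ := inf_eq_right.2 h4
    rw [posPart_inf_negPart_eq_zero] at this
    exact this.symm
  have := posPart_nonneg y
  rw [← posPart_sub_negPart y, h5, sub_zero]
  exact this

lemma OM.half_smul_nonneg {x : X} (hx : 0 ≤ x) : 0 ≤ (2⁻¹ : ℝ) • x := by
  apply OM.nonneg_of_add_self
  rw [← add_smul]
  norm_num
  exact hx

lemma OM.pow_half_smul_nonneg (m : ℕ) {x : X} (hx : 0 ≤ x) : 0 ≤ (((2:ℝ)^m)⁻¹) • x := by
  induction m with
  | zero => simpa using hx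
  | succ m ih =>
      have : (((2:ℝ)^(m+1))⁻¹) • x = (2⁻¹:ℝ) • (((2:ℝ)^m)⁻¹ • x) := by
        rw [smul_smul]; ring_nf
      rw [this]
      exact OM.half_smul_nonneg ih

lemma OM.real_smul_nonneg {c : ℝ} (hc : 0 ≤ c) {x : X} (hx : 0 ≤ x) : 0 ≤ c • x := by
  have key : ∀ j : ℕ, 0 ≤ ((⌊c * 2^j⌋₊ : ℝ) / 2^j) • x := by
    intro j
    have : ((⌊c * 2^j⌋₊ : ℝ) / 2^j) • x = ⌊c * 2^j⌋₊ • (((2:ℝ)^j)⁻¹ • x) := by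
      rw [← Nat.cast_smul_eq_nsmul ℝ, smul_smul]
      ring_nf
    rw [this]
    exact nsmul_nonneg (OM.pow_half_smul_nonneg j hx) _
  have htend : Tendsto (fun j : ℕ => ((⌊c * 2^j⌋₊ : ℝ) / 2^j)) atTop (nhds c) := by
    have h1 : ∀ j : ℕ, c - ((2:ℝ)^j)⁻¹ ≤ ((⌊c * 2^j⌋₊ : ℝ) / 2^j) := by
      intro j
      have hp : (0:ℝ) < 2^j := by positivity
      rw [le_div_iff₀ hp, sub_mul, inv_mul_cancel₀ (ne_of_gt hp)]
      linarith [Nat.lt_floor_add_one (c * 2^j)]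
    have h2 : ∀ j : ℕ, ((⌊c * 2^j⌋₊ : ℝ) / 2^j) ≤ c := by
      intro j
      have hp : (0:ℝ) < 2^j := by positivity
      rw [div_le_iff₀ hp]
      exact Nat.floor_le (by positivity)
    have hl : Tendsto (fun j : ℕ => c - ((2:ℝ)^j)⁻¹) atTop (nhds c) := by
      have : Tendsto (fun j : ℕ => ((2:ℝ)^j)⁻¹) atTop (nhds 0) := by
        simp_rw [← inv_pow]
        exact tendsto_pow_atTop_nhds_zero_of_lt_one (by norm_num) (by norm_num)
      simpa using tendsto_const_nhds.sub this
    exact tendsto_of_tendsto_of_tendsto_of_le_of_le hl tendsto_const_nhds h1 h2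
  exact ge_of_tendsto' (htend.smul_const x) key

lemma OM.smul_le_smul {c : ℝ} (hc : 0 ≤ c) {a b : X} (h : a ≤ b) : c • a ≤ c • b := by
  have := OM.real_smul_nonneg hc (sub_nonneg.2 h)
  rw [smul_sub] at this
  rw [← sub_nonneg]
  exact this

noncomputable def OM.gage (n : ℕ) (t : ℝ) : ℝ :=
  if t ∈ Icc (0:ℝ) 1 then
    (if Int.fract ((2:ℝ)^n * t) = 0 then ((2:ℝ)^n)⁻¹
     else min (Int.fract ((2:ℝ)^n * t)) (1 - Int.fract ((2:ℝ)^n * t)) / (2:ℝ)^n)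
  else (if t < 0 then -t else t - 1)

lemma OM.gage_pos (n : ℕ) (t : ℝ) : 0 < OM.gage n t := by
  unfold OM.gage
  split_ifs with h1 h2 h3
  · positivity
  · have ha := Int.fract_nonneg ((2:ℝ)^n * t)
    have hb := Int.fract_lt_one ((2:ℝ)^n * t)
    have : 0 < Int.fract ((2:ℝ)^n * t) := lt_of_le_of_ne ha (Ne.symm h2)
    apply div_pos (lt_min this (by linarith)) (by positivity)
  · linarith
  · simp only [Set.mem_Icc, not_and_or, not_le] at h1
    rcases h1 with h | h
    · exact absurd h h3
    · linarith

lemma OM.gage_tag_mem {n : ℕ} {t w : ℝ} (hw : w ∈ Icc (0:ℝ) 1)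
    (h : |w - t| < OM.gage n t) : t ∈ Icc (0:ℝ) 1 := by
  by_contra ht
  rw [OM.gage, if_neg ht] at h
  obtain ⟨hw0, hw1⟩ := hw
  rw [abs_lt] at h
  split_ifs at h with h2
  · linarith [h.1, h.2]
  · simp only [Set.mem_Icc, not_and_or, not_le] at ht
    push_neg at h2
    rcases ht with h3 | h3
    · linarith
    · linarith [h.1, h.2]

lemma OM.gage_grid (n : ℕ) {t w : ℝ} (ht : t ∈ Icc (0:ℝ) 1)
    (hd : |w - t| < OM.gage n t) {k : ℕ}
    (hk1 : (k:ℝ)/2^n ≤ w) (hk2 : w < ((k:ℝ)+1)/2^n) :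
    (k:ℝ)/2^n ≤ t ∧ t ≤ ((k:ℝ)+1)/2^n := by
  have hc : (0:ℝ) < (2:ℝ)^n := by positivity
  set c : ℝ := (2:ℝ)^n with hcdef
  set m : ℤ := ⌊c * t⌋ with hm
  have hfr : Int.fract (c * t) = c * t - m := rfl
  have hk1' : (k:ℝ) ≤ c * w := by rw [div_le_iff₀ hc] at hk1; linarith
  have hk2' : c * w < (k:ℝ) + 1 := by rw [lt_div_iff₀ hc] at hk2; linarith
  rw [OM.gage, if_pos ht] at hd
  have hAB : (k:ℝ) ≤ c * t ∧ c * t ≤ (k:ℝ) + 1 := by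
    split_ifs at hd with hs
    · have hct : c * t = (m:ℝ) := by rw [hfr] at hs; linarith
      have hcw : |c * w - c * t| < 1 := by
        have : |c * w - c * t| = c * |w - t| := by
          rw [show c * w - c * t = c * (w - t) by ring, abs_mul, abs_of_pos hc]
        rw [this]
        calc c * |w - t| < c * c⁻¹ := by
              exact mul_lt_mul_of_pos_left hd hc
        _ = 1 := mul_inv_cancel₀ (ne_of_gt hc)
      rw [abs_lt] at hcw
      have hkm : (k:ℤ) ≤ m := by
        have h' : (k:ℤ) < m + 1 := by exact_mod_cast (by push_cast; linarith [hcw.1, hcw.2] : ((k:ℤ):ℝ) < ((m:ℤ):ℝ) + 1)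
        omega
      have hmk : m ≤ (k:ℤ) + 1 := by
        have h' : m < (k:ℤ) + 2 := by exact_mod_cast (by push_cast; linarith [hcw.1, hcw.2] : ((m:ℤ):ℝ) < ((k:ℤ):ℝ) + 2)
        omega
      have hkm' : ((k:ℤ):ℝ) ≤ (m:ℝ) := by exact_mod_cast hkm
      have hmk' : (m:ℝ) ≤ ((k:ℤ):ℝ) + 1 := by exact_mod_cast hmk
      constructor
      · rw [hct]; push_cast at hkm' ⊢; linarith
      · rw [hct]; push_cast at hmk' ⊢; linarith
    · set s := Int.fract (c*t) with hsdef
      have hs0 : 0 < s := lt_of_le_of_ne (Int.fract_nonneg _) (Ne.symm hs)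
      have hs1 : s < 1 := Int.fract_lt_one _
      have hts : c * t = (m:ℝ) + s := by linarith [hfr]
      have hd' : |c * w - c * t| < min s (1-s) := by
        have heq : |c * w - c * t| = c * |w - t| := by
          rw [show c * w - c * t = c * (w - t) by ring, abs_mul, abs_of_pos hc]
        rw [heq]
        calc c * |w - t| < c * (min s (1-s) / c) := mul_lt_mul_of_pos_left hd hc
        _ = min s (1-s) := by field_simp
      rw [abs_lt] at hd'
      have hm1 : min s (1-s) ≤ s := min_le_left _ _
      have hm2 : min s (1-s) ≤ 1 - s := min_le_right _ _
      have e1 : (m:ℝ) < c * w := by linarith [hd'.1]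
      have e2 : c * w < (m:ℝ) + 1 := by linarith [hd'.2]
      have hkm : (k:ℤ) ≤ m := by
        have h' : (k:ℤ) < m + 1 := by exact_mod_cast (by push_cast; linarith : ((k:ℤ):ℝ) < ((m:ℤ):ℝ) + 1)
        omega
      have hmk : m ≤ (k:ℤ) := by
        have h' : m < (k:ℤ) + 1 := by exact_mod_cast (by push_cast; linarith : ((m:ℤ):ℝ) < ((k:ℤ):ℝ) + 1)
        omega
      have hkm' : ((k:ℤ):ℝ) ≤ (m:ℝ) := by exact_mod_cast hkm
      have hmk' : (m:ℝ) ≤ ((k:ℤ):ℝ) := by exact_mod_cast hmk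
      push_cast at hkm' hmk'
      constructor
      · linarith
      · linarith
  constructor
  · rw [div_le_iff₀ hc]; linarith [hAB.1]
  · rw [le_div_iff₀ hc]; linarith [hAB.2]

noncomputable def OM.Lsum (f : ℝ → X) (n : ℕ) : X :=
  ∑ k ∈ Finset.range (2^n), ((2:ℝ)^n)⁻¹ • f ((k:ℝ) / 2^n)

noncomputable def OM.Usum (f : ℝ → X) (n : ℕ) : X :=
  ∑ k ∈ Finset.range (2^n), ((2:ℝ)^n)⁻¹ • f (((k:ℝ)+1) / 2^n)

lemma OM.grid_mem {n k : ℕ} (hk : k ≤ 2^n) : (k:ℝ)/2^n ∈ Icc (0:ℝ) 1 := by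
  have hc : (0:ℝ) < 2^n := by positivity
  constructor
  · positivity
  · rw [div_le_one hc]
    calc (k:ℝ) ≤ ((2^n : ℕ):ℝ) := by exact_mod_cast hk
    _ = (2:ℝ)^n := by push_cast; ring

lemma OM.Usum_eq (f : ℝ → X) (n : ℕ) :
    OM.Usum f n = OM.Lsum f n + ((2:ℝ)^n)⁻¹ • (f 1 - f 0) := by
  have hc : (0:ℝ) < 2^n := by positivity
  have key : OM.Usum f n - OM.Lsum f n = ((2:ℝ)^n)⁻¹ • (f 1 - f 0) := by
    rw [OM.Usum, OM.Lsum, ← Finset.sum_sub_distrib]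
    have : ∀ k ∈ Finset.range (2^n),
        ((2:ℝ)^n)⁻¹ • f (((k:ℝ)+1) / 2^n) - ((2:ℝ)^n)⁻¹ • f ((k:ℝ) / 2^n)
        = ((2:ℝ)^n)⁻¹ • ((fun j : ℕ => f ((j:ℝ)/2^n)) (k+1) - (fun j : ℕ => f ((j:ℝ)/2^n)) k) := by
      intro k _
      simp only [smul_sub]
      congr 2
      push_cast; ring
    have tele := Finset.sum_range_sub (fun j : ℕ => f ((j:ℝ)/2^n)) (2^n)
    rw [Finset.sum_congr rfl this, ← Finset.smul_sum, tele]
    congr 2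
    · congr 1
      rw [div_eq_one_iff_eq (ne_of_gt hc)]
      push_cast; ring
    · congr 1
      norm_num
  rw [← key]; abel

lemma OM.inv_split (n : ℕ) : ((2:ℝ)^n)⁻¹ = ((2:ℝ)^(n+1))⁻¹ + ((2:ℝ)^(n+1))⁻¹ := by
  rw [pow_succ]
  have h : (2:ℝ)^n ≠ 0 := by positivity
  field_simp
  ring

lemma OM.Lsum_mono {f : ℝ → X} (hf : MonotoneOn f (Icc 0 1)) : Monotone (OM.Lsum f) := by
  apply monotone_nat_of_le_succ
  intro n
  have h2 : (2:ℕ)^(n+1) = 2 * 2^n := by ring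
  rw [OM.Lsum, OM.Lsum, h2, OM.sum_range_double]
  apply Finset.sum_le_sum
  intro j hj
  rw [Finset.mem_range] at hj
  have hinv : (0:ℝ) ≤ ((2:ℝ)^(n+1))⁻¹ := by positivity
  have e1 : ((2*j : ℕ):ℝ)/2^(n+1) = (j:ℝ)/2^n := by
    push_cast; rw [pow_succ]; field_simp
  have hmem1 : (j:ℝ)/2^n ∈ Icc (0:ℝ) 1 := OM.grid_mem hj.le
  have hb : 2*j+1 ≤ 2^(n+1) := by omega
  have hmem2 : ((2*j+1 : ℕ):ℝ)/2^(n+1) ∈ Icc (0:ℝ) 1 := OM.grid_mem hb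
  have hle : (j:ℝ)/2^n ≤ ((2*j+1:ℕ):ℝ)/2^(n+1) := by
    rw [← e1]
    gcongr
    push_cast; linarith
  have hfle : f ((j:ℝ)/2^n) ≤ f (((2*j+1:ℕ):ℝ)/2^(n+1)) := hf hmem1 hmem2 hle
  calc ((2:ℝ)^n)⁻¹ • f ((j:ℝ)/2^n)
      = ((2:ℝ)^(n+1))⁻¹ • f ((j:ℝ)/2^n) + ((2:ℝ)^(n+1))⁻¹ • f ((j:ℝ)/2^n) := by
        rw [← add_smul, ← OM.inv_split]
  _ ≤ ((2:ℝ)^(n+1))⁻¹ • f (((2*j:ℕ):ℝ)/2^(n+1)) + ((2:ℝ)^(n+1))⁻¹ • f (((2*j+1:ℕ):ℝ)/2^(n+1)) := by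
        apply add_le_add
        · rw [e1]
        · exact OM.smul_le_smul hinv hfle

lemma OM.Usum_anti {f : ℝ → X} (hf : MonotoneOn f (Icc 0 1)) : Antitone (OM.Usum f) := by
  apply antitone_nat_of_succ_le
  intro n
  have h2 : (2:ℕ)^(n+1) = 2 * 2^n := by ring
  rw [OM.Usum, OM.Usum, h2, OM.sum_range_double]
  apply Finset.sum_le_sum
  intro j hj
  rw [Finset.mem_range] at hj
  have hinv : (0:ℝ) ≤ ((2:ℝ)^(n+1))⁻¹ := by positivity
  have e2 : (((2*j+1 : ℕ):ℝ)+1)/2^(n+1) = ((j:ℝ)+1)/2^n := by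
    push_cast; rw [pow_succ]; field_simp; ring
  have hb : 2*j+1+1 ≤ 2^(n+1) := by omega
  have hmem2 : ((j:ℝ)+1)/2^n ∈ Icc (0:ℝ) 1 := by
    have := OM.grid_mem (show j+1 ≤ 2^n by omega)
    convert this using 2
    push_cast; ring
  have hmem1 : (((2*j:ℕ):ℝ)+1)/2^(n+1) ∈ Icc (0:ℝ) 1 := by
    have := OM.grid_mem (show 2*j+1 ≤ 2^(n+1) by omega)
    convert this using 2
    push_cast; ring
  have hle : (((2*j:ℕ):ℝ)+1)/2^(n+1) ≤ ((j:ℝ)+1)/2^n := by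
    rw [← e2]
    gcongr
    push_cast; linarith
  have hfle : f ((((2*j:ℕ):ℝ)+1)/2^(n+1)) ≤ f (((j:ℝ)+1)/2^n) := hf hmem1 hmem2 hle
  calc ((2:ℝ)^(n+1))⁻¹ • f ((((2*j:ℕ):ℝ)+1)/2^(n+1)) + ((2:ℝ)^(n+1))⁻¹ • f ((((2*j+1:ℕ):ℝ)+1)/2^(n+1))
      ≤ ((2:ℝ)^(n+1))⁻¹ • f (((j:ℝ)+1)/2^n) + ((2:ℝ)^(n+1))⁻¹ • f (((j:ℝ)+1)/2^n) := by
        apply add_le_add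
        · exact OM.smul_le_smul hinv hfle
        · rw [e2]
  _ = ((2:ℝ)^n)⁻¹ • f (((j:ℝ)+1)/2^n) := by
        rw [← add_smul, ← OM.inv_split]

lemma OM.Lsum_le_Usum {f : ℝ → X} (hf : MonotoneOn f (Icc 0 1)) (n : ℕ) :
    OM.Lsum f n ≤ OM.Usum f n := by
  apply Finset.sum_le_sum
  intro k hk
  rw [Finset.mem_range] at hk
  have hinv : (0:ℝ) ≤ ((2:ℝ)^n)⁻¹ := by positivity
  have hmem1 : (k:ℝ)/2^n ∈ Icc (0:ℝ) 1 := OM.grid_mem hk.le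
  have hmem2 : ((k:ℝ)+1)/2^n ∈ Icc (0:ℝ) 1 := by
    have := OM.grid_mem (show k+1 ≤ 2^n by omega)
    convert this using 2
    push_cast; ring
  have hle : (k:ℝ)/2^n ≤ ((k:ℝ)+1)/2^n := by gcongr ?_/2^n; linarith
  exact OM.smul_le_smul hinv (hf hmem1 hmem2 hle)

lemma OM.Lsum_le_Usum' {f : ℝ → X} (hf : MonotoneOn f (Icc 0 1)) (p q : ℕ) :
    OM.Lsum f p ≤ OM.Usum f q :=
  calc OM.Lsum f p ≤ OM.Lsum f (max p q) := OM.Lsum_mono hf (le_max_left _ _)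
  _ ≤ OM.Usum f (max p q) := OM.Lsum_le_Usum hf _
  _ ≤ OM.Usum f q := OM.Usum_anti hf (le_max_right _ _)

end OMAux
theorem oM_integrable_of_monotone
    {X : Type*} [NormedAddCommGroup X] [Lattice X] [HasSolidNorm X] [IsOrderedAddMonoid X] [NormedSpace ℝ X] [CompleteSpace X]
    (hDC : ∀ s : Set X, s.Nonempty → BddAbove s → ∃ x, IsLUB s x) (f : ℝ → X) (hf : MonotoneOn f (Set.Icc 0 1)) :
    ∃ J : X, HasOMIntegralOn f volume (Set.Icc 0 1) J := by
  classical
  have h01 : (0:ℝ) ∈ Icc (0:ℝ) 1 := by norm_num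
  have h11 : (1:ℝ) ∈ Icc (0:ℝ) 1 := by norm_num
  have hd0 : f 0 ≤ f 1 := hf h01 h11 zero_le_one
  obtain ⟨J, hJ⟩ := hDC (Set.range (OM.Lsum f)) ⟨OM.Lsum f 0, ⟨0, rfl⟩⟩
    ⟨OM.Usum f 0, by rintro _ ⟨p, rfl⟩; exact OM.Lsum_le_Usum' hf p 0⟩
  refine ⟨J, fun n => ((2:ℝ)^n)⁻¹ • (f 1 - f 0), ⟨?_, ?_⟩,
    fun n => OM.gage n, fun n => OM.gage_pos n, ?_⟩
  · -- Antitone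
    apply antitone_nat_of_succ_le
    intro n
    rw [← sub_nonneg, ← sub_smul]
    exact OM.real_smul_nonneg (by
      rw [sub_nonneg]
      gcongr <;> norm_num) (sub_nonneg.2 hd0)
  · -- IsGLB
    constructor
    · rintro _ ⟨n, rfl⟩
      exact OM.real_smul_nonneg (by positivity) (sub_nonneg.2 hd0)
    · intro x hx
      have hxn : ∀ n : ℕ, x ≤ ((2:ℝ)^n)⁻¹ • (f 1 - f 0) := fun n => hx ⟨n, rfl⟩
      have htb : Tendsto (fun n : ℕ => ((2:ℝ)^n)⁻¹ • (f 1 - f 0)) atTop (nhds 0) := by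
        have h1 : Tendsto (fun n : ℕ => ((2:ℝ)^n)⁻¹) atTop (nhds 0) := by
          simp_rw [← inv_pow]
          exact tendsto_pow_atTop_nhds_zero_of_lt_one (by norm_num) (by norm_num)
        simpa using h1.smul_const (f 1 - f 0)
      exact ge_of_tendsto' htb hxn
  · -- main estimate
    intro n P hFine
    set c : ℝ := (2:ℝ)^n with hcdef
    have hc : (0:ℝ) < c := by positivity
    set N : ℕ := 2^n with hNdef
    have hNc : ((N:ℕ):ℝ) = c := by rw [hNdef, hcdef]; push_cast; ring
    set I : ℕ → Set ℝ := fun k => Ico ((k:ℝ)/c) (((k:ℝ)+1)/c) with hIdef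
    have covE : ∀ i, P.E i ⊆ Icc (0:ℝ) 1 := by
      intro i
      have h := subset_iUnion P.E i
      rwa [P.cover] at h
    have hIsub : ∀ k, k < N → I k ⊆ Icc (0:ℝ) 1 := by
      intro k hk w hw
      obtain ⟨hw1, hw2⟩ := hw
      have hg1 : (k:ℝ)/c ∈ Icc (0:ℝ) 1 := OM.grid_mem hk.le
      have hg2 : ((k:ℝ)+1)/c ∈ Icc (0:ℝ) 1 := by
        have := OM.grid_mem (show k+1 ≤ 2^n by omega)
        convert this using 2
        push_cast; ring
      exact ⟨le_trans hg1.1 hw1, le_trans hw2.le hg2.2⟩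
    have hIfin : ∀ s : Set ℝ, ∀ k : ℕ, volume (s ∩ I k) ≠ ⊤ := by
      intro s k
      refine ne_top_of_le_ne_top ?_ (measure_mono inter_subset_right)
      rw [hIdef]
      simp only [Real.volume_Ico]
      exact ENNReal.ofReal_ne_top
    have hIdisj : ∀ k l : ℕ, k ≠ l → Disjoint (I k) (I l) := by
      intro k l hkl
      rw [hIdef, Set.Ico_disjoint_Ico]
      rcases Nat.lt_or_ge k l with h | h
      · apply min_le_of_left_le
        apply le_max_of_le_right
        gcongr
        exact_mod_cast h
      · have h' : l < k := by omega
        apply min_le_of_right_le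
        apply le_max_of_le_left
        gcongr
        exact_mod_cast h'
    -- Claim A
    have claimA : ∀ i, (volume (P.E i)).toReal
        = ∑ k ∈ Finset.range N, (volume (P.E i ∩ I k)).toReal := by
      intro i
      have hsub1 : P.E i ⊆ (P.E i ∩ Ico (0:ℝ) 1) ∪ {1} := by
        intro x hx
        obtain ⟨hx0, hx1⟩ := covE i hx
        by_cases hx1' : x = 1
        · exact Or.inr hx1'
        · exact Or.inl ⟨hx, hx0, lt_of_le_of_ne hx1 hx1'⟩
      have hmeq : volume (P.E i) = volume (P.E i ∩ Ico (0:ℝ) 1) := by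
        apply le_antisymm
        · calc volume (P.E i) ≤ volume ((P.E i ∩ Ico (0:ℝ) 1) ∪ {1}) := measure_mono hsub1
          _ ≤ volume (P.E i ∩ Ico (0:ℝ) 1) + volume ({1} : Set ℝ) := measure_union_le _ _
          _ = volume (P.E i ∩ Ico (0:ℝ) 1) := by rw [Real.volume_singleton, add_zero]
        · exact measure_mono inter_subset_left
      have hIcover : Ico (0:ℝ) 1 = ⋃ k ∈ Finset.range N, I k := by
        ext w
        simp only [Set.mem_iUnion, Finset.mem_range]
        constructor
        · rintro ⟨hw0, hw1⟩
          refine ⟨⌊c * w⌋₊, ?_, ?_, ?_⟩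
          · have : c * w < c := by nlinarith
            have h2 : (⌊c * w⌋₊ : ℝ) ≤ c * w := Nat.floor_le (by positivity)
            have : (⌊c * w⌋₊ : ℝ) < ((N:ℕ):ℝ) := by rw [hNc]; linarith
            exact_mod_cast this
          · rw [div_le_iff₀ hc, mul_comm]
            exact Nat.floor_le (by positivity)
          · rw [lt_div_iff₀ hc, mul_comm]
            exact Nat.lt_floor_add_one _
        · rintro ⟨k, hk, hw⟩
          have := hIsub k hk hw
          obtain ⟨hw0, hw2⟩ := hw
          refine ⟨le_trans (by positivity) hw0, ?_⟩
          have hg2 : ((k:ℝ)+1)/c ≤ 1 := by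
            rw [div_le_one hc, ← hNc]
            have : (k:ℕ) + 1 ≤ N := hk
            exact_mod_cast this
          linarith
      have hset : P.E i ∩ Ico (0:ℝ) 1 = ⋃ k ∈ Finset.range N, (P.E i ∩ I k) := by
        rw [hIcover, Set.inter_iUnion₂]
      have hpd : (↑(Finset.range N) : Set ℕ).PairwiseDisjoint (fun k => P.E i ∩ I k) := by
        intro k _ l _ hkl
        exact (hIdisj k l hkl).mono inter_subset_right inter_subset_right
      have hmeas : ∀ k ∈ Finset.range N, MeasurableSet (P.E i ∩ I k) :=
        fun k _ => (P.meas i).inter measurableSet_Ico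
      rw [hmeq, hset, measure_biUnion_finset hpd hmeas,
        ENNReal.toReal_sum (fun k _ => hIfin _ k)]
    -- Claim B
    have claimB : ∀ k, k < N →
        ∑ i : Fin P.k, (volume (P.E i ∩ I k)).toReal = c⁻¹ := by
      intro k hk
      have huni : ⋃ i ∈ (Finset.univ : Finset (Fin P.k)), (P.E i ∩ I k) = I k := by
        rw [show (⋃ i ∈ (Finset.univ : Finset (Fin P.k)), (P.E i ∩ I k)) = ⋃ i, (P.E i ∩ I k) by simp,
          ← Set.iUnion_inter, P.cover]
        exact inter_eq_self_of_subset_right (hIsub k hk)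
      have hpd : (↑(Finset.univ : Finset (Fin P.k)) : Set (Fin P.k)).PairwiseDisjoint
          (fun i => P.E i ∩ I k) := by
        intro i _ j _ hij
        exact (P.disj i j hij).mono inter_subset_left inter_subset_left
      have hmeas : ∀ i ∈ (Finset.univ : Finset (Fin P.k)), MeasurableSet (P.E i ∩ I k) :=
        fun i _ => (P.meas i).inter measurableSet_Ico
      have := measure_biUnion_finset (μ := volume) hpd hmeas
      rw [huni] at this
      have hIk : volume (I k) = ENNReal.ofReal c⁻¹ := by
        rw [hIdef]
        simp only [Real.volume_Ico]
        congr 1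
        field_simp
        ring
      calc ∑ i : Fin P.k, (volume (P.E i ∩ I k)).toReal
          = (∑ i : Fin P.k, volume (P.E i ∩ I k)).toReal :=
            (ENNReal.toReal_sum (fun i _ => hIfin _ k)).symm
      _ = (volume (I k)).toReal := by rw [← this]
      _ = c⁻¹ := by rw [hIk, ENNReal.toReal_ofReal (by positivity)]
    -- Claim C
    have claimC : ∀ (i : Fin P.k) (k : ℕ), k < N →
        (volume (P.E i ∩ I k)).toReal • f ((k:ℝ)/c) ≤ (volume (P.E i ∩ I k)).toReal • f (P.tag i)
        ∧ (volume (P.E i ∩ I k)).toReal • f (P.tag i) ≤ (volume (P.E i ∩ I k)).toReal • f (((k:ℝ)+1)/c) := by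
      intro i k hk
      rcases (P.E i ∩ I k).eq_empty_or_nonempty with he | ⟨w, hwE, hwI⟩
      · rw [he]
        simp
      · have ha : (0:ℝ) ≤ (volume (P.E i ∩ I k)).toReal := ENNReal.toReal_nonneg
        have hw01 : w ∈ Icc (0:ℝ) 1 := covE i hwE
        have hdist : |w - P.tag i| < OM.gage n (P.tag i) := by
          have := hFine i w hwE
          rwa [Real.dist_eq] at this
        have htag : P.tag i ∈ Icc (0:ℝ) 1 := OM.gage_tag_mem hw01 hdist
        have hgrid := OM.gage_grid n htag hdist hwI.1 hwI.2
        have hmk : (k:ℝ)/c ∈ Icc (0:ℝ) 1 := OM.grid_mem hk.le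
        have hmk1 : ((k:ℝ)+1)/c ∈ Icc (0:ℝ) 1 := by
          have := OM.grid_mem (show k+1 ≤ 2^n by omega)
          convert this using 2
          push_cast; ring
        exact ⟨OM.smul_le_smul ha (hf hmk htag hgrid.1),
          OM.smul_le_smul ha (hf htag hmk1 hgrid.2)⟩
    -- Assemble
    have key1 : OM.Lsum f n ≤ P.sum f volume := by
      rw [OM.Lsum, TaggedPart.sum]
      calc ∑ k ∈ Finset.range N, c⁻¹ • f ((k:ℝ)/c)
          = ∑ k ∈ Finset.range N, ∑ i : Fin P.k,
              (volume (P.E i ∩ I k)).toReal • f ((k:ℝ)/c) := by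
            apply Finset.sum_congr rfl
            intro k hk
            rw [Finset.mem_range] at hk
            rw [← Finset.sum_smul, claimB k hk]
      _ ≤ ∑ k ∈ Finset.range N, ∑ i : Fin P.k,
              (volume (P.E i ∩ I k)).toReal • f (P.tag i) := by
            apply Finset.sum_le_sum
            intro k hk
            rw [Finset.mem_range] at hk
            exact Finset.sum_le_sum (fun i _ => (claimC i k hk).1)
      _ = ∑ i : Fin P.k, ∑ k ∈ Finset.range N,
              (volume (P.E i ∩ I k)).toReal • f (P.tag i) := Finset.sum_comm
      _ = ∑ i : Fin P.k, (volume (P.E i)).toReal • f (P.tag i) := by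
            apply Finset.sum_congr rfl
            intro i _
            rw [← Finset.sum_smul, ← claimA i]
    have key2 : P.sum f volume ≤ OM.Usum f n := by
      rw [OM.Usum, TaggedPart.sum]
      calc ∑ i : Fin P.k, (volume (P.E i)).toReal • f (P.tag i)
          = ∑ i : Fin P.k, ∑ k ∈ Finset.range N,
              (volume (P.E i ∩ I k)).toReal • f (P.tag i) := by
            apply Finset.sum_congr rfl
            intro i _
            rw [← Finset.sum_smul, ← claimA i]
      _ = ∑ k ∈ Finset.range N, ∑ i : Fin P.k,
              (volume (P.E i ∩ I k)).toReal • f (P.tag i) := Finset.sum_comm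
      _ ≤ ∑ k ∈ Finset.range N, ∑ i : Fin P.k,
              (volume (P.E i ∩ I k)).toReal • f (((k:ℝ)+1)/c) := by
            apply Finset.sum_le_sum
            intro k hk
            rw [Finset.mem_range] at hk
            exact Finset.sum_le_sum (fun i _ => (claimC i k hk).2)
      _ = ∑ k ∈ Finset.range N, c⁻¹ • f (((k:ℝ)+1)/c) := by
            apply Finset.sum_congr rfl
            intro k hk
            rw [Finset.mem_range] at hk
            rw [← Finset.sum_smul, claimB k hk]
    have hLJ : OM.Lsum f n ≤ J := hJ.1 ⟨n, rfl⟩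
    have hJU : J ≤ OM.Usum f n := hJ.2 (by rintro _ ⟨p, rfl⟩; exact OM.Lsum_le_Usum' hf p n)
    have hb : OM.Usum f n - OM.Lsum f n = ((2:ℝ)^n)⁻¹ • (f 1 - f 0) := by
      rw [OM.Usum_eq f n]; abel
    rw [abs_le']
    constructor
    · calc P.sum f volume - J ≤ OM.Usum f n - OM.Lsum f n := sub_le_sub key2 hLJ
      _ = _ := hb
    · rw [neg_sub]
      calc J - P.sum f volume ≤ OM.Usum f n - OM.Lsum f n := sub_le_sub hJU key1
      _ = _ := hb
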